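/- Let f : X → Y be a continuous map between compact metrizable spaces, let g : X → [0,1]^k be continuous with every fiber of f △ g of covering dimension at most 0, and let ω_X be an open cover of X. Then for every (y,t) ∈ Y × [0,1]^k there exist a finite disjoint family ν of open subsets of X refining ω_X and an open neighborhood O of (y,t) in Y × [0,1]^k such that (f △ g)⁻¹(O) ⊆ ⋃ν. -/

import Mathlib

open Set Topology

noncomputable section

namespace Paper

/-- Order of a family of sets at most `k`: no point belongs to more than `k` members. -/
def OrderLE {X : Type*} (c : Set (Set X)) (k : ℕ) : Prop :=
  ∀ x : X, {u ∈ c | x ∈ u}.Finite ∧ {u ∈ c | x ∈ u}.ncard ≤ k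

/-- Covering dimension at most `n` (with `n : ℤ` so that `n = -1` means empty):
every open cover admits an open refinement, still covering, of order at most `n + 1`. -/
def CovDimLE (X : Type*) [TopologicalSpace X] (n : ℤ) : Prop :=
  ∀ c : Set (Set X), (∀ u ∈ c, IsOpen u) → ⋃₀ c = univ →
    ∃ d : Set (Set X), (∀ v ∈ d, IsOpen v) ∧ ⋃₀ d = univ ∧
      (∀ v ∈ d, ∃ u ∈ c, v ⊆ u) ∧ OrderLE d (n + 1).toNat

/-- Covering dimension of a subset, via the subspace topology. -/
def DimLE {X : Type*} [TopologicalSpace X] (A : Set X) (n : ℤ) : Prop :=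
  CovDimLE A n

/-- `T` separates `Z` between `B` and `C`: the complement `Z \ T` splits into two
disjoint relatively open pieces, one containing `Z ∩ B` and the other `Z ∩ C`. -/
def Separates {X : Type*} [TopologicalSpace X] (Z T B C : Set X) : Prop :=
  ∃ U V : Set X, IsOpen U ∧ IsOpen V ∧ Z \ T ⊆ U ∪ V ∧
    Disjoint (U ∩ (Z \ T)) (V ∩ (Z \ T)) ∧ Z ∩ B ⊆ U ∩ (Z \ T) ∧ Z ∩ C ⊆ V ∩ (Z \ T)

/-- `A` is σ-compact: a countable union of compact sets. -/
def IsSigmaCompact' {X : Type*} [TopologicalSpace X] (A : Set X) : Prop :=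
  ∃ K : ℕ → Set X, (∀ n, IsCompact (K n)) ∧ A = ⋃ n, K n

/-- A C-space (property C). -/
def CSpace (X : Type*) [TopologicalSpace X] : Prop :=
  ∀ α : ℕ → Set (Set X), (∀ n, (∀ u ∈ α n, IsOpen u) ∧ ⋃₀ α n = univ) →
    ∃ μ : ℕ → Set (Set X),
      (∀ n, (∀ u ∈ μ n, IsOpen u) ∧ (μ n).PairwiseDisjoint id ∧
        ∀ u ∈ μ n, ∃ v ∈ α n, u ⊆ v) ∧
      ⋃₀ (⋃ n, μ n) = univ

/-- A family of sets is discrete in `X`: every point has a neighborhood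
meeting at most one member of the family. -/
def DiscreteFamily {X : Type*} [TopologicalSpace X] (E : ℕ → Set X) : Prop :=
  ∀ x : X, ∃ W ∈ 𝓝 x, {p : ℕ | (W ∩ E p).Nonempty}.Subsingleton

/-- `E` admits a cover by open subsets of `X` of order ≤ `k` and mesh ≤ `ε`. -/
def AdmitsSmallCover {X : Type*} [MetricSpace X] (E : Set X) (k : ℕ) (ε : ℝ) : Prop :=
  ∃ c : Set (Set X), (∀ u ∈ c, IsOpen u) ∧ E ⊆ ⋃₀ c ∧
    (∀ u ∈ c, Metric.diam u ≤ ε) ∧ OrderLE c k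

/-- The unit cube `[0,1]^k`. -/
abbrev Cube (k : ℕ) : Type := Fin k → Set.Icc (0 : ℝ) 1

/-- A simplicial map between (geometric) simplicial complexes: it sends the vertex set
of each face onto the vertex set of a face and is affine on each closed simplex. -/
def IsSimplicialMap {E F : Type*} [AddCommGroup E] [Module ℝ E] [AddCommGroup F] [Module ℝ F]
    (K : Geometry.SimplicialComplex ℝ E) (L : Geometry.SimplicialComplex ℝ F)
    (p : E → F) : Prop :=
  ∀ s ∈ K.faces, (∃ t ∈ L.faces, p '' (s : Set E) = (t : Set F)) ∧
    ∃ g : E →ᵃ[ℝ] F, ∀ x ∈ convexHull ℝ (s : Set E), p x = g x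

/-- An `ω`-map relative to a subset `S` of the target: a continuous map such that the
preimage of some open cover of `S` refines `ω`. -/
def IsOmegaMapOn {X P : Type*} [TopologicalSpace X] [TopologicalSpace P]
    (κ : X → P) (S : Set P) (ω : Set (Set X)) : Prop :=
  Continuous κ ∧ ∃ c : Set (Set P), (∀ u ∈ c, IsOpen u) ∧ S ⊆ ⋃₀ c ∧
    ∀ u ∈ c, ∃ w ∈ ω, κ ⁻¹' u ⊆ w

/-- `f` admits approximation by `k`-dimensional simplicial maps. -/
def AdmitsApprox {X Y : Type*} [TopologicalSpace X] [TopologicalSpace Y]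
    (f : X → Y) (k : ℕ) : Prop :=
  ∀ ωX : Set (Set X), (∀ u ∈ ωX, IsOpen u) → ⋃₀ ωX = univ →
  ∀ ωY : Set (Set Y), (∀ u ∈ ωY, IsOpen u) → ⋃₀ ωY = univ →
    ∃ (n m : ℕ) (K : Geometry.SimplicialComplex ℝ (Fin n → ℝ))
      (L : Geometry.SimplicialComplex ℝ (Fin m → ℝ))
      (κX : X → (Fin n → ℝ)) (κY : Y → (Fin m → ℝ)) (p : (Fin n → ℝ) → (Fin m → ℝ)),
      range κX ⊆ K.space ∧ range κY ⊆ L.space ∧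
      IsOmegaMapOn κX K.space ωX ∧ IsOmegaMapOn κY L.space ωY ∧
      IsSimplicialMap K L p ∧ (∀ x, p (κX x) = κY (f x)) ∧
      ∀ z : Fin m → ℝ, DimLE {x | x ∈ K.space ∧ p x = z} (k : ℤ)

/-- The open star of a vertex `a` in a simplicial complex `K`: the points of `|K|`
not lying in any closed simplex missing `a`. -/
def openStar {E : Type*} [AddCommGroup E] [Module ℝ E]
    (K : Geometry.SimplicialComplex ℝ E) (a : E) : Set E :=
  K.space \ ⋃ s ∈ {s ∈ K.faces | a ∉ s}, convexHull ℝ (s : Set E)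

end Paper

open Paper in
private lemma aux_sep {Z : Type*} [TopologicalSpace Z] [T2Space Z] {ι : Type*} [Finite ι]
    (K : ι → Set Z) (hK : ∀ i, IsCompact (K i))
    (hd : ∀ i j, i ≠ j → Disjoint (K i) (K j)) :
    ∃ U : ι → Set Z, (∀ i, IsOpen (U i)) ∧ (∀ i, K i ⊆ U i) ∧
      ∀ i j, i ≠ j → Disjoint (U i) (U j) := by
  have h : ∀ i j, ∃ A : Set Z × Set Z, i ≠ j →
      IsOpen A.1 ∧ IsOpen A.2 ∧ K i ⊆ A.1 ∧ K j ⊆ A.2 ∧ Disjoint A.1 A.2 := by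
    intro i j
    by_cases hij : i = j
    · exact ⟨(∅, ∅), fun h => absurd hij h⟩
    · obtain ⟨A, B, hA, hB, hiA, hjB, hAB⟩ :=
        SeparatedNhds.of_isCompact_isCompact (hK i) (hK j) (hd i j hij)
      exact ⟨(A, B), fun _ => ⟨hA, hB, hiA, hjB, hAB⟩⟩
  choose A hA using h
  refine ⟨fun i => ⋂ j, ⋂ (h : i ≠ j), (A i j).1 ∩ (A j i).2, ?_, ?_, ?_⟩
  · intro i
    refine isOpen_iInter_of_finite fun j => isOpen_iInter_of_finite fun h => ?_
    exact ((hA i j h).1).inter ((hA j i (Ne.symm h)).2.1)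
  · intro i x hx
    refine mem_iInter.2 fun j => mem_iInter.2 fun h => ?_
    exact ⟨(hA i j h).2.2.1 hx, (hA j i (Ne.symm h)).2.2.2.1 hx⟩
  · intro i j hij
    have h1 : (⋂ l, ⋂ (_ : i ≠ l), (A i l).1 ∩ (A l i).2) ⊆ (A i j).1 := fun x hx =>
      (mem_iInter.1 (mem_iInter.1 hx j) hij).1
    have h2 : (⋂ l, ⋂ (_ : j ≠ l), (A j l).1 ∩ (A l j).2) ⊆ (A i j).2 := fun x hx =>
      (mem_iInter.1 (mem_iInter.1 hx i) (Ne.symm hij)).2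
    exact ((hA i j hij).2.2.2.2).mono h1 h2


theorem stmt16 {X Y : Type*} [MetricSpace X] [CompactSpace X] [MetricSpace Y] [CompactSpace Y]
    (f : X → Y) (hf : Continuous f) (k : ℕ)
    (g : X → Paper.Cube k) (hg : Continuous g)
    (hdim : ∀ (y : Y) (t : Paper.Cube k), Paper.DimLE {x : X | f x = y ∧ g x = t} 0)
    (ωX : Set (Set X)) (hωX : ∀ u ∈ ωX, IsOpen u) (hcov : ⋃₀ ωX = Set.univ) :
    ∀ (y : Y) (t : Paper.Cube k),
      ∃ (ν : Set (Set X)) (O : Set (Y × Paper.Cube k)),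
        ν.Finite ∧ (∀ u ∈ ν, IsOpen u) ∧ ν.PairwiseDisjoint id ∧
        (∀ u ∈ ν, ∃ w ∈ ωX, u ⊆ w) ∧
        IsOpen O ∧ (y, t) ∈ O ∧
        (fun x : X => (f x, g x)) ⁻¹' O ⊆ ⋃₀ ν := by
  intro y t
  set F : Set X := {x : X | f x = y ∧ g x = t} with hF
  have hFclosed : IsClosed F := by
    have : F = (fun x : X => (f x, g x)) ⁻¹' {(y, t)} := by
      ext x; simp [hF, Prod.ext_iff]
    rw [this]
    exact isClosed_singleton.preimage (hf.prodMk hg)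
  have hFcp : IsCompact F := hFclosed.isCompact
  haveI : CompactSpace F := isCompact_iff_compactSpace.mp hFcp
  -- apply zero-dimensionality of the fiber
  obtain ⟨d, hdo, hdcov, hdref, hord⟩ :=
    hdim y t ((fun w => (Subtype.val ⁻¹' w : Set F)) '' ωX)
      (by rintro u ⟨w, hw, rfl⟩; exact (hωX w hw).preimage continuous_subtype_val)
      (by
        ext x; simp only [mem_univ, iff_true, mem_sUnion]
        obtain ⟨w, hw, hxw⟩ := by
          have := hcov ▸ (mem_univ (x : X)); exact mem_sUnion.1 this
        exact ⟨_, ⟨w, hw, rfl⟩, hxw⟩)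
  have hdisj : ∀ u ∈ d, ∀ v ∈ d, u ≠ v → Disjoint u v := by
    intro u hu v hv huv
    rw [Set.disjoint_left]
    intro x hxu hxv
    have h1 := (hord x).2
    have hfin := (hord x).1
    have hsub : {u, v} ⊆ {w ∈ d | x ∈ w} := by
      rintro w (rfl | rfl) <;> exact ⟨by assumption, by assumption⟩
    have : ({u, v} : Set (Set F)).ncard ≤ 1 := by
      refine le_trans (Set.ncard_le_ncard hsub hfin) ?_
      simpa using h1
    rw [Set.ncard_pair huv] at this
    omega
  -- finite subcover
  have hcov' : (univ : Set F) ⊆ ⋃ u ∈ d, u := by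
    rw [← sUnion_eq_biUnion, hdcov]
  obtain ⟨d', hd'sub, hd'fin, hd'cov⟩ :=
    isCompact_univ.elim_finite_subcover_image (fun u hu => hdo u hu) hcov'
  -- each member of d' is closed in F
  have hclosed : ∀ v ∈ d', IsClosed v := by
    intro v hv
    have hcompl : vᶜ = ⋃ u ∈ d' \ {v}, u := by
      ext x
      constructor
      · intro hx
        obtain ⟨u, hu, hxu⟩ := mem_iUnion₂.1 (hd'cov (mem_univ x))
        refine mem_iUnion₂.2 ⟨u, ⟨hu, ?_⟩, hxu⟩
        rintro rfl; exact hx hxu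
      · intro hx
        obtain ⟨u, ⟨hu, hune⟩, hxu⟩ := mem_iUnion₂.1 hx
        exact fun hxv =>
          (hdisj u (hd'sub hu) v (hd'sub hv) hune).le_bot ⟨hxu, hxv⟩
    rw [← isOpen_compl_iff, hcompl]
    exact isOpen_biUnion fun u hu => hdo u (hd'sub hu.1)
  haveI : Finite ↥d' := hd'fin.to_subtype
  set K : ↥d' → Set X := fun v => Subtype.val '' (v : Set F) with hK
  have hKcomp : ∀ v, IsCompact (K v) :=
    fun v => (((hclosed v.1 v.2).isCompact)).image continuous_subtype_val
  have hKdisj : ∀ i j : ↥d', i ≠ j → Disjoint (K i) (K j) := by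
    intro i j hij
    refine (Set.disjoint_image_iff Subtype.val_injective).2 ?_
    exact hdisj i.1 (hd'sub i.2) j.1 (hd'sub j.2) (fun h => hij (Subtype.ext h))
  obtain ⟨U, hUo, hKU, hUdisj⟩ := aux_sep K hKcomp hKdisj
  -- refinement data
  have href : ∀ v : ↥d', ∃ w ∈ ωX, K v ⊆ w := by
    intro v
    obtain ⟨u, ⟨w, hw, rfl⟩, hvu⟩ := hdref v.1 (hd'sub v.2)
    exact ⟨w, hw, (Set.image_mono hvu).trans (Set.image_preimage_subset _ _)⟩
  choose w hwmem hKw using href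
  set ν : Set (Set X) := Set.range (fun v : ↥d' => U v ∩ w v) with hν
  have hFsub : F ⊆ ⋃₀ ν := by
    intro x hx
    obtain ⟨v, hv, hxv⟩ := mem_iUnion₂.1 (hd'cov (mem_univ ⟨x, hx⟩))
    have hxK : x ∈ K ⟨v, hv⟩ := ⟨⟨x, hx⟩, hxv, rfl⟩
    exact ⟨U ⟨v, hv⟩ ∩ w ⟨v, hv⟩, ⟨⟨v, hv⟩, rfl⟩, hKU _ hxK, hKw _ hxK⟩
  have hνopen : ∀ u ∈ ν, IsOpen u := by
    rintro u ⟨v, rfl⟩; exact (hUo v).inter (hωX _ (hwmem v))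
  -- the neighborhood O
  set C : Set X := (⋃₀ ν)ᶜ with hC
  have hCcomp : IsCompact C := ((isOpen_sUnion hνopen).isClosed_compl).isCompact
  set M : Set (Y × Paper.Cube k) := (fun x : X => (f x, g x)) '' C with hM
  have hMclosed : IsClosed M := (hCcomp.image (hf.prodMk hg)).isClosed
  refine ⟨ν, Mᶜ, Set.finite_range _, hνopen, ?_, ?_, hMclosed.isOpen_compl, ?_, ?_⟩
  · rintro a ⟨i, rfl⟩ b ⟨j, rfl⟩ hab
    exact (hUdisj i j (fun h => hab (by rw [h]))).mono
      (inter_subset_left) (inter_subset_left)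
  · rintro u ⟨v, rfl⟩; exact ⟨w v, hwmem v, inter_subset_right⟩
  · rintro ⟨x, hxC, hxeq⟩
    have hxF : x ∈ F := by
      constructor
      · exact congrArg Prod.fst hxeq
      · exact congrArg Prod.snd hxeq
    exact hxC (hFsub hxF)
  · intro x hx
    by_contra hxn
    exact hx ⟨x, hxn, rfl⟩
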